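/- For every odd integer d ≥ 3, let φ_d : ℂ³ → ℂ³ be given by φ_d(x, y, z) = (I·(x − y)^d, (x + y)^d, z^d). There do not exist a matrix A ∈ GL₃(ℂ) and polynomials ψ₀, ψ₁, ψ₂ in three variables with rational coefficients, each homogeneous of degree d, such that for every v ∈ ℂ³ with v ≠ 0 there exists c ∈ ℂ with c ≠ 0 such that (ψ₀(v), ψ₁(v), ψ₂(v)) = c • (A⁻¹·φ_d(A·v)) (the ψᵢ evaluated in ℂ via ℚ ⊆ ℂ). That is, for every odd d ≥ 3, ℚ is not a field of definition for the conjugacy class of φ_d. -/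

import Mathlib

open Matrix

noncomputable def phiD (d : ℕ) (v : Fin 3 → ℂ) : Fin 3 → ℂ :=
  ![Complex.I * (v 0 - v 1) ^ d, (v 0 + v 1) ^ d, (v 2) ^ d]

private def PM : Matrix (Fin 3) (Fin 3) ℂ := !![1,-1,0;1,1,0;0,0,1]
private noncomputable def PI : Matrix (Fin 3) (Fin 3) ℂ := !![1/2,1/2,0;-1/2,1/2,0;0,0,1]
private def SM : Matrix (Fin 3) (Fin 3) ℂ := !![0,1,0;1,0,0;0,0,1]
private noncomputable def DM : Matrix (Fin 3) (Fin 3) ℂ := !![Complex.I,0,0;0,1,0;0,0,1]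
private noncomputable def DI : Matrix (Fin 3) (Fin 3) ℂ := !![-Complex.I,0,0;0,1,0;0,0,1]

private lemma hPPI : PM * PI = 1 := by
  ext i j
  fin_cases i <;> fin_cases j <;>
    simp [PM, PI, Matrix.mul_apply, Fin.sum_univ_three, Matrix.one_apply] <;> norm_num

private lemma hPIP : PI * PM = 1 := by
  ext i j
  fin_cases i <;> fin_cases j <;>
    simp [PM, PI, Matrix.mul_apply, Fin.sum_univ_three, Matrix.one_apply] <;> norm_num

private lemma hSS : SM * SM = 1 := by
  ext i j
  fin_cases i <;> fin_cases j <;>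
    simp [SM, Matrix.mul_apply, Fin.sum_univ_three, Matrix.one_apply, Matrix.vecHead, Matrix.vecTail]

private lemma hDID : DI * DM = 1 := by
  ext i j
  fin_cases i <;> fin_cases j <;>
    simp [DI, DM, Matrix.mul_apply, Fin.sum_univ_three, Matrix.one_apply, Matrix.vecHead, Matrix.vecTail] <;>
    simp [Complex.ext_iff]

private lemma conj_aeval (p : MvPolynomial (Fin 3) ℚ) (v : Fin 3 → ℂ) :
    (starRingEnd ℂ) (MvPolynomial.aeval v p) =
      MvPolynomial.aeval (fun i => (starRingEnd ℂ) (v i)) p := by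
  rw [MvPolynomial.aeval_def, MvPolynomial.aeval_def,
    MvPolynomial.eval₂_comp_left (starRingEnd ℂ)]
  congr 1
  apply Subsingleton.elim

private lemma conj_mulVec (M : Matrix (Fin 3) (Fin 3) ℂ) (x : Fin 3 → ℂ) :
    (fun i => (starRingEnd ℂ) (M.mulVec x i)) =
      (M.map (starRingEnd ℂ)).mulVec (fun i => (starRingEnd ℂ) (x i)) := by
  funext i
  simp [Matrix.mulVec, dotProduct, map_sum, Matrix.map_apply]

private lemma phi_eq (d : ℕ) (w : Fin 3 → ℂ) :
    phiD d w = DM.mulVec (fun j => (PM.mulVec w j) ^ d) := by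
  funext i
  fin_cases i <;>
    simp [phiD, DM, PM, Matrix.mulVec, dotProduct, Fin.sum_univ_three] <;> ring_nf

private lemma phi_conj (d : ℕ) (hodd : Odd d) (w : Fin 3 → ℂ) :
    (fun i => (starRingEnd ℂ) (phiD d w i)) =
      phiD d (SM.mulVec (fun i => (starRingEnd ℂ) (w i))) := by
  funext i
  fin_cases i
  · simp [phiD, SM, Matrix.mulVec, dotProduct, Fin.sum_univ_three, Complex.conj_I]
    rw [show (starRingEnd ℂ) (w 1) - (starRingEnd ℂ) (w 0)
        = -((starRingEnd ℂ) (w 0) - (starRingEnd ℂ) (w 1)) by ring, hodd.neg_pow]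
    ring
  · simp [phiD, SM, Matrix.mulVec, dotProduct, Fin.sum_univ_three]
    ring_nf
  · simp [phiD, SM, Matrix.mulVec, dotProduct, Fin.sum_univ_three]

open Polynomial in
private lemma coeff_one_eval (d : ℕ) (hd : 3 ≤ d) (a b e f : ℂ) :
    Polynomial.eval 0 (Polynomial.derivative ((C a + C b * X) ^ d * (C e + C f * X ^ d)))
      = d * a ^ (d - 1) * b * e := by
  have h1 : d ≠ 0 := by omega
  have h2 : d - 1 ≠ 0 := by omega
  simp [Polynomial.derivative_pow, zero_pow h1, zero_pow h2]

set_option maxHeartbeats 2000000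

theorem odd_degree_Q_not_field_of_definition (d : ℕ) (hd : 3 ≤ d) (hodd : Odd d) :
    ¬ ∃ (A : Matrix.GeneralLinearGroup (Fin 3) ℂ)
        (ψ : Fin 3 → MvPolynomial (Fin 3) ℚ),
      (∀ i, (ψ i).IsHomogeneous d) ∧
      ∀ v : Fin 3 → ℂ, v ≠ 0 → ∃ c : ℂ, c ≠ 0 ∧
        (fun i => MvPolynomial.aeval v (ψ i)) =
          c • ((↑(A⁻¹) : Matrix (Fin 3) (Fin 3) ℂ).mulVec
            (phiD d ((A : Matrix (Fin 3) (Fin 3) ℂ).mulVec v))) := by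
  rintro ⟨A, ψ, hhom, H⟩
  have hd0 : d ≠ 0 := by omega
  set σ := starRingEnd ℂ with hσdef
  set a : Matrix (Fin 3) (Fin 3) ℂ := ↑A with ha
  set a' : Matrix (Fin 3) (Fin 3) ℂ := ↑(A⁻¹) with ha'
  have haa' : a * a' = 1 := A.mul_inv
  have ha'a : a' * a = 1 := A.inv_mul
  set am := a.map σ with hamdef
  set am' := a'.map σ with hamdef'
  have hmapmul : ∀ M N : Matrix (Fin 3) (Fin 3) ℂ, (M * N).map σ = M.map σ * N.map σ := by
    intro M N
    ext i j
    simp [Matrix.map_apply, Matrix.mul_apply, map_sum]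
  have hmapmap : ∀ M : Matrix (Fin 3) (Fin 3) ℂ, (M.map σ).map σ = M := by
    intro M; ext i j; simp [Matrix.map_apply, hσdef]
  have hmapone : (1 : Matrix (Fin 3) (Fin 3) ℂ).map σ = 1 := by
    ext i j; simp [Matrix.map_apply, Matrix.one_apply, apply_ite σ]
  have hamam' : am * am' = 1 := by rw [hamdef, hamdef', ← hmapmul, haa', hmapone]
  have ham'am : am' * am = 1 := by rw [hamdef, hamdef', ← hmapmul, ha'a, hmapone]
  set K := am * a' with hKdef
  set Kc := a * am' with hKcdef
  have hKKc : K * Kc = 1 := by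
    rw [hKdef, hKcdef, mul_assoc, ← mul_assoc a' a, ha'a, one_mul, hamam']
  have hKcK : Kc * K = 1 := by
    rw [hKdef, hKcdef, mul_assoc, ← mul_assoc am' am, ham'am, one_mul, haa']
  have hKcconj : ∀ i j, Kc i j = σ (K i j) := by
    have : Kc = K.map σ := by
      rw [hKdef, hKcdef, hmapmul, hmapmap]
    intro i j; rw [this]; rfl
  -- symmetry from rationality
  have Hsym : ∀ v : Fin 3 → ℂ, v ≠ 0 → ∃ c : ℂ, c ≠ 0 ∧
      am'.mulVec (phiD d (SM.mulVec (am.mulVec v))) = c • a'.mulVec (phiD d (a.mulVec v)) := by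
    intro v hv
    have hvs : (fun i => σ (v i)) ≠ 0 := by
      intro h0
      apply hv
      funext i
      have := congrFun h0 i
      simpa [hσdef] using this
    obtain ⟨c₁, hc₁, he₁⟩ := H v hv
    obtain ⟨c₂, hc₂, he₂⟩ := H _ hvs
    have hσc₂ : σ c₂ ≠ 0 := by simpa [hσdef] using hc₂
    refine ⟨(σ c₂)⁻¹ * c₁, mul_ne_zero (inv_ne_zero hσc₂) hc₁, ?_⟩
    have key_eq : (fun i => σ ((a'.mulVec (phiD d (a.mulVec (fun j => σ (v j))))) i))
        = am'.mulVec (phiD d (SM.mulVec (am.mulVec v))) := by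
      rw [conj_mulVec]
      congr 1
      rw [phi_conj d hodd]
      congr 1
      rw [conj_mulVec]
      congr 1
      funext j; simp [hσdef]
      rfl
    have hvv : (fun j => (starRingEnd ℂ) (σ (v j))) = v := by
      funext j; simp [hσdef]
    have hL : (fun i => σ (MvPolynomial.aeval (fun j => σ (v j)) (ψ i)))
        = fun i => MvPolynomial.aeval v (ψ i) := by
      funext i
      rw [conj_aeval, hvv]
    have he₂' := congrArg (fun g : Fin 3 → ℂ => (fun i => σ (g i))) he₂
    rw [hL] at he₂'
    have he₂'' : (fun i => MvPolynomial.aeval v (ψ i))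
        = σ c₂ • am'.mulVec (phiD d (SM.mulVec (am.mulVec v))) := by
      rw [he₂']
      rw [← key_eq]
      funext i
      simp [Pi.smul_apply, smul_eq_mul, _root_.map_mul]
    rw [he₁] at he₂''
    funext i
    have := congrFun he₂''.symm i
    simp only [Pi.smul_apply, smul_eq_mul] at this ⊢
    field_simp at this ⊢
    linear_combination this
  -- the semi-conjugacy in power-map coordinates
  set Cm := PM * SM * K * PI with hCmdef
  set Nm := DI * K * DM with hNmdef
  have star2 : ∀ u : Fin 3 → ℂ, u ≠ 0 → ∃ c : ℂ, c ≠ 0 ∧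
      ∀ i, (Cm.mulVec u i) ^ d = c * (Nm.mulVec (fun j => u j ^ d) i) := by
    intro u hu
    set w := PI.mulVec u with hw
    have hPw : PM.mulVec w = u := by
      rw [hw, Matrix.mulVec_mulVec, hPPI, Matrix.one_mulVec]
    have hwne : w ≠ 0 := fun h => hu (by rw [← hPw, h, Matrix.mulVec_zero])
    set v := a'.mulVec w with hv
    have hav : a.mulVec v = w := by rw [hv, Matrix.mulVec_mulVec, haa', Matrix.one_mulVec]
    have hvne : v ≠ 0 := fun h => hwne (by rw [← hav, h, Matrix.mulVec_zero])
    obtain ⟨c, hc, heq⟩ := Hsym v hvne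
    refine ⟨c, hc, ?_⟩
    have hamv : am.mulVec v = K.mulVec w := by
      rw [hv, Matrix.mulVec_mulVec, hKdef]
    have heq2 : phiD d (SM.mulVec (K.mulVec w)) = c • K.mulVec (phiD d w) := by
      have h2 := congrArg (fun x => am.mulVec x) heq
      simp only [Matrix.mulVec_smul] at h2
      rw [Matrix.mulVec_mulVec, hamam', Matrix.one_mulVec, hamv, hav] at h2
      rw [h2, hKdef, ← Matrix.mulVec_mulVec]
    rw [phi_eq d, phi_eq d] at heq2
    have h3 := congrArg (fun x => DI.mulVec x) heq2
    simp only [Matrix.mulVec_smul, Matrix.mulVec_mulVec] at h3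
    rw [hDID, Matrix.one_mulVec] at h3
    intro i
    have h4 := congrFun h3 i
    simp only [Pi.smul_apply, smul_eq_mul] at h4
    have hM1 : (PM * (SM * K)).mulVec w = Cm.mulVec u := by
      rw [hw, Matrix.mulVec_mulVec, hCmdef]
      congr 1
      simp [Matrix.mul_assoc]
    have hM2 : DI * (K * DM) = Nm := by rw [hNmdef]; simp [Matrix.mul_assoc]
    rw [hM1, hM2, hPw] at h4
    exact h4

  -- inverse of Cm
  set CmI := PM * Kc * SM * PI with hCmIdef
  have hCCI : Cm * CmI = 1 := by
    rw [hCmdef, hCmIdef]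
    simp only [Matrix.mul_assoc]
    rw [show PI * (PM * (Kc * (SM * PI))) = Kc * (SM * PI) by
      rw [← Matrix.mul_assoc, hPIP, Matrix.one_mul]]
    rw [show K * (Kc * (SM * PI)) = SM * PI by rw [← Matrix.mul_assoc, hKKc, Matrix.one_mul]]
    rw [show SM * (SM * PI) = PI by rw [← Matrix.mul_assoc, hSS, Matrix.one_mul]]
    exact hPPI
  have hCIC : CmI * Cm = 1 := by
    rw [hCmdef, hCmIdef]
    simp only [Matrix.mul_assoc]
    rw [show PI * (PM * (SM * (K * PI))) = SM * (K * PI) by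
      rw [← Matrix.mul_assoc, hPIP, Matrix.one_mul]]
    rw [show SM * (SM * (K * PI)) = K * PI by rw [← Matrix.mul_assoc, hSS, Matrix.one_mul]]
    rw [show Kc * (K * PI) = PI by rw [← Matrix.mul_assoc, hKcK, Matrix.one_mul]]
    exact hPPI
  -- basis vector instances
  have hbasis : ∀ (j : Fin 3), ∃ cj : ℂ, cj ≠ 0 ∧ ∀ i, Cm i j ^ d = cj * Nm i j := by
    intro j
    obtain ⟨c, hc, he⟩ := star2 (Pi.single j (1:ℂ)) (by
      intro h0; have := congrFun h0 j; simp [Pi.single_apply] at this)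
    refine ⟨c, hc, fun i => ?_⟩
    have hpow : (fun l => (Pi.single j (1:ℂ) l) ^ d) = Pi.single j (1:ℂ) := by
      funext l
      by_cases hl : l = j
      · subst hl; simp
      · simp [Pi.single_apply, hl, zero_pow hd0]
    have h1 := he i
    rw [hpow] at h1
    simpa using h1
  -- the key polynomial-coefficient identity
  have key : ∀ i i' j k : Fin 3, j ≠ k →
      Cm i j ^ (d-1) * Cm i' j ^ (d-1) * (Cm i k * Cm i' j - Cm i j * Cm i' k) = 0 := by
    intro i i' j k hjk
    obtain ⟨cj, hcj, hbj⟩ := hbasis j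
    have hmv : ∀ (M : Matrix (Fin 3) (Fin 3) ℂ) (s : ℂ) (r : Fin 3),
        M.mulVec ((Pi.single j 1 : Fin 3 → ℂ) + s • (Pi.single k 1 : Fin 3 → ℂ)) r = M r j + M r k * s := by
      intro M s r
      rw [Matrix.mulVec_add, Matrix.mulVec_smul]
      simp [mul_comm]
    have hpt : ∀ t : ℂ, (Cm i j + Cm i k * t) ^ d * (Nm i' j + Nm i' k * t ^ d)
        = (Cm i' j + Cm i' k * t) ^ d * (Nm i j + Nm i k * t ^ d) := by
      intro t
      obtain ⟨c, hc, he⟩ := star2 ((Pi.single j 1 : Fin 3 → ℂ) + t • (Pi.single k 1 : Fin 3 → ℂ)) (by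
        intro h0
        have := congrFun h0 j
        simp [Pi.single_apply, Ne.symm hjk] at this)
      have hpow : (fun l => (((Pi.single j 1 : Fin 3 → ℂ) + t • (Pi.single k 1 : Fin 3 → ℂ)) l) ^ d)
          = (Pi.single j 1 : Fin 3 → ℂ) + t^d • (Pi.single k 1 : Fin 3 → ℂ) := by
        funext l
        by_cases hlj : l = j
        · subst hlj; simp [Pi.single_apply, Ne.symm hjk]
        · by_cases hlk : l = k
          · subst hlk; simp [Pi.single_apply, hlj, mul_pow]
          · simp [Pi.single_apply, hlj, hlk, zero_pow hd0]
      have h1 := he i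
      have h2 := he i'
      rw [hpow] at h1 h2
      rw [hmv Cm t i, hmv Nm (t^d) i] at h1
      rw [hmv Cm t i', hmv Nm (t^d) i'] at h2
      rw [h1, h2]; ring
    have hpoly : ((Polynomial.C (Cm i j) + Polynomial.C (Cm i k) * Polynomial.X) ^ d *
          (Polynomial.C (Nm i' j) + Polynomial.C (Nm i' k) * Polynomial.X ^ d) : Polynomial ℂ)
        = (Polynomial.C (Cm i' j) + Polynomial.C (Cm i' k) * Polynomial.X) ^ d *
          (Polynomial.C (Nm i j) + Polynomial.C (Nm i k) * Polynomial.X ^ d) := by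
      apply Polynomial.funext
      intro t
      simpa using hpt t
    have hder := congrArg (fun r : Polynomial ℂ => Polynomial.eval 0 (Polynomial.derivative r)) hpoly
    simp only [coeff_one_eval d hd] at hder
    have hbij := hbj i
    have hbij' := hbj i'
    have hsplit : ∀ x : ℂ, x ^ d = x ^ (d-1) * x := by
      intro x; rw [← pow_succ]; congr 1; omega
    rw [hsplit] at hbij hbij'
    have hcancel : (d:ℂ) * (Cm i j ^ (d-1) * Cm i' j ^ (d-1)
        * (Cm i k * Cm i' j - Cm i j * Cm i' k)) = 0 := by
      linear_combination (d:ℂ) * Cm i k * Cm i j ^ (d-1) * hbij'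
        - (d:ℂ) * Cm i' k * Cm i' j ^ (d-1) * hbij + cj * hder
    have hdc : (d:ℂ) ≠ 0 := Nat.cast_ne_zero.mpr hd0
    rcases mul_eq_zero.mp hcancel with h | h
    · exact absurd h hdc
    · exact h
  -- each row of Cm has at most one nonzero entry
  have key2 : ∀ i j k : Fin 3, j ≠ k → Cm i j ≠ 0 → Cm i k ≠ 0 → False := by
    intro i j k hjk hij hik
    have hall : ∀ r, Cm i k * Cm r j = Cm i j * Cm r k := by
      intro r
      by_cases h1 : Cm r j = 0
      · by_cases h2 : Cm r k = 0
        · rw [h1, h2]; ring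
        · have hk := key i r k j (Ne.symm hjk)
          have f1 : Cm i k ^ (d-1) ≠ 0 := pow_ne_zero _ hik
          have f2 : Cm r k ^ (d-1) ≠ 0 := pow_ne_zero _ h2
          have h3 := (mul_eq_zero.mp hk).resolve_left (mul_ne_zero f1 f2)
          linear_combination -h3
      · have hk := key i r j k hjk
        have f1 : Cm i j ^ (d-1) ≠ 0 := pow_ne_zero _ hij
        have f2 : Cm r j ^ (d-1) ≠ 0 := pow_ne_zero _ h1
        have h3 := (mul_eq_zero.mp hk).resolve_left (mul_ne_zero f1 f2)
        linear_combination h3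
    have hsum : Cm i k * ∑ l, CmI j l * Cm l j = Cm i j * ∑ l, CmI j l * Cm l k := by
      rw [Finset.mul_sum, Finset.mul_sum]
      apply Finset.sum_congr rfl
      intro l _
      linear_combination CmI j l * hall l
    rw [show ∑ l, CmI j l * Cm l j = (CmI * Cm) j j from (Matrix.mul_apply).symm,
        show ∑ l, CmI j l * Cm l k = (CmI * Cm) j k from (Matrix.mul_apply).symm, hCIC] at hsum
    simp [Matrix.one_apply, hjk] at hsum
    exact hik hsum
  -- each row has a nonzero entry
  have hrow : ∀ i, ∃ j, Cm i j ≠ 0 := by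
    intro i
    by_contra hno
    push_neg at hno
    have h1 : (Cm * CmI) i i = 1 := by rw [hCCI]; simp [Matrix.one_apply]
    rw [Matrix.mul_apply] at h1
    simp [hno] at h1
  choose jf hjf using hrow
  have hzero : ∀ i k, k ≠ jf i → Cm i k = 0 := by
    intro i k hk
    by_contra hnz
    exact key2 i (jf i) k (Ne.symm hk) (hjf i) hnz
  have hinj : ∀ i i', jf i = jf i' → i = i' := by
    intro i i' hj
    by_contra hii
    have h1 : (Cm * CmI) i i' = 0 := by rw [hCCI]; simp [Matrix.one_apply, hii]
    rw [Matrix.mul_apply] at h1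
    have h1' : Cm i (jf i) * CmI (jf i) i' = 0 := by
      rw [← h1]
      symm
      apply Finset.sum_eq_single
      · intro l _ hl; rw [hzero i l hl, zero_mul]
      · intro hb; exact absurd (Finset.mem_univ _) hb
    have hCI0 : CmI (jf i) i' = 0 := by
      rcases mul_eq_zero.mp h1' with h | h
      · exact absurd h (hjf i)
      · exact h
    have h2 : (Cm * CmI) i' i' = 1 := by rw [hCCI]; simp [Matrix.one_apply]
    rw [Matrix.mul_apply] at h2
    have h2' : ∑ l, Cm i' l * CmI l i' = Cm i' (jf i') * CmI (jf i') i' := by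
      apply Finset.sum_eq_single
      · intro l _ hl; rw [hzero i' l hl, zero_mul]
      · intro hb; exact absurd (Finset.mem_univ _) hb
    rw [h2', ← hj, hCI0, mul_zero] at h2
    exact zero_ne_one h2

  -- entries of Cm and Nm in terms of K
  have hc00 : Cm 0 0 = ((K 1 0 - K 0 0) - (K 1 1 - K 0 1))/2 := by
    rw [hCmdef]; simp [PM, SM, PI, Matrix.mul_apply, Fin.sum_univ_three, Matrix.vecMul, dotProduct, Matrix.vecHead, Matrix.vecTail]
    try ring
  have hc01 : Cm 0 1 = ((K 1 0 - K 0 0) + (K 1 1 - K 0 1))/2 := by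
    rw [hCmdef]; simp [PM, SM, PI, Matrix.mul_apply, Fin.sum_univ_three, Matrix.vecMul, dotProduct, Matrix.vecHead, Matrix.vecTail]
    try ring
  have hc02 : Cm 0 2 = K 1 2 - K 0 2 := by
    rw [hCmdef]; simp [PM, SM, PI, Matrix.mul_apply, Fin.sum_univ_three, Matrix.vecMul, dotProduct, Matrix.vecHead, Matrix.vecTail]
    try ring
  have hc10 : Cm 1 0 = ((K 1 0 + K 0 0) - (K 1 1 + K 0 1))/2 := by
    rw [hCmdef]; simp [PM, SM, PI, Matrix.mul_apply, Fin.sum_univ_three, Matrix.vecMul, dotProduct, Matrix.vecHead, Matrix.vecTail]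
    try ring
  have hc11 : Cm 1 1 = ((K 1 0 + K 0 0) + (K 1 1 + K 0 1))/2 := by
    rw [hCmdef]; simp [PM, SM, PI, Matrix.mul_apply, Fin.sum_univ_three, Matrix.vecMul, dotProduct, Matrix.vecHead, Matrix.vecTail]
    try ring
  have hc12 : Cm 1 2 = K 0 2 + K 1 2 := by
    rw [hCmdef]; simp [PM, SM, PI, Matrix.mul_apply, Fin.sum_univ_three, Matrix.vecMul, dotProduct, Matrix.vecHead, Matrix.vecTail]
    try ring
  have hc20 : Cm 2 0 = (K 2 0 - K 2 1)/2 := by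
    rw [hCmdef]; simp [PM, SM, PI, Matrix.mul_apply, Fin.sum_univ_three, Matrix.vecMul, dotProduct, Matrix.vecHead, Matrix.vecTail]
    try ring
  have hc21 : Cm 2 1 = (K 2 0 + K 2 1)/2 := by
    rw [hCmdef]; simp [PM, SM, PI, Matrix.mul_apply, Fin.sum_univ_three, Matrix.vecMul, dotProduct, Matrix.vecHead, Matrix.vecTail]
    try ring
  have hn00 : Nm 0 0 = K 0 0 := by
    rw [hNmdef]; simp [DI, DM, Matrix.mul_apply, Fin.sum_univ_three, Matrix.vecMul, dotProduct, Matrix.vecHead, Matrix.vecTail]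
    ring_nf
    simp [Complex.I_sq]
  have hn01 : Nm 0 1 = -Complex.I * K 0 1 := by
    rw [hNmdef]; simp [DI, DM, Matrix.mul_apply, Fin.sum_univ_three, Matrix.vecMul, dotProduct, Matrix.vecHead, Matrix.vecTail]
    try ring
  have hn02 : Nm 0 2 = -Complex.I * K 0 2 := by
    rw [hNmdef]; simp [DI, DM, Matrix.mul_apply, Fin.sum_univ_three, Matrix.vecMul, dotProduct, Matrix.vecHead, Matrix.vecTail]
    try ring
  have hn10 : Nm 1 0 = Complex.I * K 1 0 := by
    rw [hNmdef]; simp [DI, DM, Matrix.mul_apply, Fin.sum_univ_three, Matrix.vecMul, dotProduct, Matrix.vecHead, Matrix.vecTail]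
    try ring
  have hn11 : Nm 1 1 = K 1 1 := by
    rw [hNmdef]; simp [DI, DM, Matrix.mul_apply, Fin.sum_univ_three, Matrix.vecMul, dotProduct, Matrix.vecHead, Matrix.vecTail]
    try ring
  have hn12 : Nm 1 2 = K 1 2 := by
    rw [hNmdef]; simp [DI, DM, Matrix.mul_apply, Fin.sum_univ_three, Matrix.vecMul, dotProduct, Matrix.vecHead, Matrix.vecTail]
    try ring
  -- entries of K * Kc = 1
  have e00 : K 0 0 * σ (K 0 0) + K 0 1 * σ (K 1 0) + K 0 2 * σ (K 2 0) = 1 := by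
    have h : (K * Kc) 0 0 = (1 : Matrix (Fin 3) (Fin 3) ℂ) 0 0 := by rw [hKKc]
    rw [Matrix.mul_apply, Fin.sum_univ_three, hKcconj, hKcconj, hKcconj,
      Matrix.one_apply_eq] at h
    exact h
  have e10 : K 1 0 * σ (K 0 0) + K 1 1 * σ (K 1 0) + K 1 2 * σ (K 2 0) = 0 := by
    have h : (K * Kc) 1 0 = (1 : Matrix (Fin 3) (Fin 3) ℂ) 1 0 := by rw [hKKc]
    rw [Matrix.mul_apply, Fin.sum_univ_three, hKcconj, hKcconj, hKcconj,
      Matrix.one_apply_ne (by decide)] at h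
    exact h
  -- instances of star2 at basis vector e0 and at (1,1,1)
  obtain ⟨c₀, hc₀, hB0⟩ := hbasis 0
  obtain ⟨c₁, hc₁u, hB1⟩ := star2 ![1,1,1] (by
    intro h; have := congrFun h 0; simp at this)
  have honep : (fun j => (![1,1,1] : Fin 3 → ℂ) j ^ d) = ![1,1,1] := by
    funext l; fin_cases l <;> simp
  have hB1' : ∀ i, (Cm i 0 + Cm i 1 + Cm i 2) ^ d = c₁ * (Nm i 0 + Nm i 1 + Nm i 2) := by
    intro i
    have h := hB1 i
    rw [honep] at h
    rw [show Cm.mulVec ![1,1,1] i = Cm i 0 + Cm i 1 + Cm i 2 by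
          simp [Matrix.mulVec, dotProduct, Fin.sum_univ_three],
        show Nm.mulVec ![1,1,1] i = Nm i 0 + Nm i 1 + Nm i 2 by
          simp [Matrix.mulVec, dotProduct, Fin.sum_univ_three]] at h
    exact h
  -- case analysis on the positions of the nonzero entries
  have hfin : ∀ x : Fin 3, x = 0 ∨ x = 1 ∨ x = 2 := by decide
  have hne01 : jf 0 ≠ jf 1 := fun h => (by decide : ¬ ((0:Fin 3) = 1)) (hinj 0 1 h)
  have hne02 : jf 0 ≠ jf 2 := fun h => (by decide : ¬ ((0:Fin 3) = 2)) (hinj 0 2 h)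
  have hne12 : jf 1 ≠ jf 2 := fun h => (by decide : ¬ ((1:Fin 3) = 2)) (hinj 1 2 h)
  rcases hfin (jf 0) with h0|h0|h0 <;> rcases hfin (jf 1) with h1|h1|h1 <;>
    rcases hfin (jf 2) with h2|h2|h2 <;>
    [skip; skip; skip; skip; skip; skip; skip; skip; skip; skip; skip; skip; skip; skip;
     skip; skip; skip; skip; skip; skip; skip; skip; skip; skip; skip; skip; skip] <;>
    first
      | (exact hne01 (h0.trans h1.symm))
      | (exact hne02 (h0.trans h2.symm))
      | (exact hne12 (h1.trans h2.symm))
      | skip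
  -- Case jf = (0,1,2)
  · have z01 : Cm 0 1 = 0 := hzero 0 1 (by rw [h0]; decide)
    have z02 : Cm 0 2 = 0 := hzero 0 2 (by rw [h0]; decide)
    have z10 : Cm 1 0 = 0 := hzero 1 0 (by rw [h1]; decide)
    have z12 : Cm 1 2 = 0 := hzero 1 2 (by rw [h1]; decide)
    have z01' : ((K 1 0 - K 0 0) + (K 1 1 - K 0 1))/2 = 0 := by rw [← hc01]; exact z01
    have z02' : K 1 2 - K 0 2 = 0 := by rw [← hc02]; exact z02
    have z10' : ((K 1 0 + K 0 0) - (K 1 1 + K 0 1))/2 = 0 := by rw [← hc10]; exact z10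
    have z12' : K 0 2 + K 1 2 = 0 := by rw [← hc12]; exact z12
    have A1 : K 0 2 = 0 := by linear_combination (z12' - z02')/2
    have A2 : K 1 2 = 0 := by linear_combination (z12' + z02')/2
    have hNm10 : Nm 1 0 = 0 := by
      have h := hB0 1
      rw [z10, zero_pow hd0] at h
      exact ((mul_eq_zero.mp h.symm).resolve_left hc₀)
    rw [hn10] at hNm10
    have A5 : K 1 0 = 0 := (mul_eq_zero.mp hNm10).resolve_left Complex.I_ne_zero
    have A6 : K 0 1 = 0 := by linear_combination A5 - z01' - z10'
    have A7 : K 1 1 = K 0 0 := by linear_combination z01' - z10'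
    have hS0C : Cm 0 0 + Cm 0 1 + Cm 0 2 = -(K 0 0) := by
      rw [hc00, hc01, hc02]; linear_combination A5 + A2 - A1
    have hS0N : Nm 0 0 + Nm 0 1 + Nm 0 2 = K 0 0 := by
      rw [hn00, hn01, hn02]; linear_combination -Complex.I * A6 - Complex.I * A1
    have hS1C : Cm 1 0 + Cm 1 1 + Cm 1 2 = K 0 0 := by
      rw [hc10, hc11, hc12]; linear_combination A5 + A1 + A2
    have hS1N : Nm 1 0 + Nm 1 1 + Nm 1 2 = K 0 0 := by
      rw [hn10, hn11, hn12]; linear_combination Complex.I * A5 + A7 + A2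
    have g0 := hB1' 0
    rw [hS0C, hS0N, hodd.neg_pow] at g0
    have g1 := hB1' 1
    rw [hS1C, hS1N] at g1
    have hK000 : c₁ * K 0 0 = 0 := by linear_combination -(g0 + g1)/2
    have hK00 : K 0 0 = 0 := (mul_eq_zero.mp hK000).resolve_left hc₁u
    rw [hK00, A6, A1] at e00
    simpa using e00
  -- Case jf = (0,2,1)
  · have z01 : Cm 0 1 = 0 := hzero 0 1 (by rw [h0]; decide)
    have z02 : Cm 0 2 = 0 := hzero 0 2 (by rw [h0]; decide)
    have z10 : Cm 1 0 = 0 := hzero 1 0 (by rw [h1]; decide)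
    have z11 : Cm 1 1 = 0 := hzero 1 1 (by rw [h1]; decide)
    have z02' : K 1 2 - K 0 2 = 0 := by rw [← hc02]; exact z02
    have z10' : ((K 1 0 + K 0 0) - (K 1 1 + K 0 1))/2 = 0 := by rw [← hc10]; exact z10
    have z11' : ((K 1 0 + K 0 0) + (K 1 1 + K 0 1))/2 = 0 := by rw [← hc11]; exact z11
    have hNm10 : Nm 1 0 = 0 := by
      have h := hB0 1
      rw [z10, zero_pow hd0] at h
      exact ((mul_eq_zero.mp h.symm).resolve_left hc₀)
    rw [hn10] at hNm10
    have B1 : K 1 0 = 0 := (mul_eq_zero.mp hNm10).resolve_left Complex.I_ne_zero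
    have B2 : K 0 0 = 0 := by linear_combination -B1 + z10' + z11'
    have sB1 : σ (K 1 0) = 0 := by rw [B1]; simp
    have f1 : K 0 2 * σ (K 2 0) = 1 := by
      linear_combination e00 - σ (K 0 0) * B2 - K 0 1 * sB1
    have f2 : K 0 2 * σ (K 2 0) = 0 := by
      linear_combination e10 - σ (K 0 0) * B1 - K 1 1 * sB1 - σ (K 2 0) * z02'
    exact one_ne_zero (f1.symm.trans f2)
  -- Case jf = (1,0,2)
  · have z00 : Cm 0 0 = 0 := hzero 0 0 (by rw [h0]; decide)
    have z02 : Cm 0 2 = 0 := hzero 0 2 (by rw [h0]; decide)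
    have z11 : Cm 1 1 = 0 := hzero 1 1 (by rw [h1]; decide)
    have z12 : Cm 1 2 = 0 := hzero 1 2 (by rw [h1]; decide)
    have z20 : Cm 2 0 = 0 := hzero 2 0 (by rw [h2]; decide)
    have z00' : ((K 1 0 - K 0 0) - (K 1 1 - K 0 1))/2 = 0 := by rw [← hc00]; exact z00
    have z02' : K 1 2 - K 0 2 = 0 := by rw [← hc02]; exact z02
    have z11' : ((K 1 0 + K 0 0) + (K 1 1 + K 0 1))/2 = 0 := by rw [← hc11]; exact z11
    have z12' : K 0 2 + K 1 2 = 0 := by rw [← hc12]; exact z12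
    have z20' : (K 2 0 - K 2 1)/2 = 0 := by rw [← hc20]; exact z20
    have z21 : Cm 2 1 = 0 := hzero 2 1 (by rw [h2]; decide)
    have z21' : (K 2 0 + K 2 1)/2 = 0 := by rw [← hc21]; exact z21
    have hNm00 : Nm 0 0 = 0 := by
      have h := hB0 0
      rw [z00, zero_pow hd0] at h
      exact ((mul_eq_zero.mp h.symm).resolve_left hc₀)
    rw [hn00] at hNm00
    have D1 : K 0 0 = 0 := hNm00
    have D2 : K 2 0 = 0 := by linear_combination z20' + z21'
    have D3 : K 0 2 = 0 := by linear_combination (z12' - z02')/2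
    have D4 : K 1 0 + K 0 1 = 0 := by linear_combination z00' + z11'
    have sD4 : σ (K 1 0) + σ (K 0 1) = 0 := by
      have := congrArg σ D4
      simpa [map_add] using this
    have f : K 0 1 * σ (K 0 1) = -1 := by
      linear_combination -e00 + σ (K 0 0) * D1 + σ (K 2 0) * D3 + K 0 1 * sD4
    rw [hσdef, Complex.mul_conj] at f
    have f' : Complex.normSq (K 0 1) = -1 := by exact_mod_cast f
    linarith [Complex.normSq_nonneg (K 0 1)]
  -- Case jf = (1,2,0)
  · have z00 : Cm 0 0 = 0 := hzero 0 0 (by rw [h0]; decide)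
    have z02 : Cm 0 2 = 0 := hzero 0 2 (by rw [h0]; decide)
    have z10 : Cm 1 0 = 0 := hzero 1 0 (by rw [h1]; decide)
    have z11 : Cm 1 1 = 0 := hzero 1 1 (by rw [h1]; decide)
    have z00' : ((K 1 0 - K 0 0) - (K 1 1 - K 0 1))/2 = 0 := by rw [← hc00]; exact z00
    have z02' : K 1 2 - K 0 2 = 0 := by rw [← hc02]; exact z02
    have z10' : ((K 1 0 + K 0 0) - (K 1 1 + K 0 1))/2 = 0 := by rw [← hc10]; exact z10
    have z11' : ((K 1 0 + K 0 0) + (K 1 1 + K 0 1))/2 = 0 := by rw [← hc11]; exact z11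
    have E1 : K 1 0 + K 0 0 = 0 := by linear_combination z10' + z11'
    have E2 : K 1 1 + K 0 1 = 0 := by linear_combination z11' - z10'
    have E3 : K 0 1 - K 0 0 = 0 := by linear_combination z00' - E1/2 + E2/2
    have sE1 : σ (K 1 0) + σ (K 0 0) = 0 := by
      have := congrArg σ E1
      simpa [map_add] using this
    have f1 : K 0 2 * σ (K 2 0) = 1 := by
      linear_combination e00 - K 0 1 * sE1 + σ (K 0 0) * E3
    have f2 : K 0 2 * σ (K 2 0) = 0 := by
      linear_combination e10 - σ (K 0 0) * E1 - σ (K 1 0) * E2 + K 0 1 * sE1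
        - σ (K 0 0) * E3 - σ (K 2 0) * z02'
    exact one_ne_zero (f1.symm.trans f2)
  -- Case jf = (2,0,1)
  · have z00 : Cm 0 0 = 0 := hzero 0 0 (by rw [h0]; decide)
    have z01 : Cm 0 1 = 0 := hzero 0 1 (by rw [h0]; decide)
    have z11 : Cm 1 1 = 0 := hzero 1 1 (by rw [h1]; decide)
    have z12 : Cm 1 2 = 0 := hzero 1 2 (by rw [h1]; decide)
    have z00' : ((K 1 0 - K 0 0) - (K 1 1 - K 0 1))/2 = 0 := by rw [← hc00]; exact z00
    have z01' : ((K 1 0 - K 0 0) + (K 1 1 - K 0 1))/2 = 0 := by rw [← hc01]; exact z01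
    have z11' : ((K 1 0 + K 0 0) + (K 1 1 + K 0 1))/2 = 0 := by rw [← hc11]; exact z11
    have z12' : K 0 2 + K 1 2 = 0 := by rw [← hc12]; exact z12
    have G1 : K 1 0 - K 0 0 = 0 := by linear_combination z00' + z01'
    have G2 : K 1 1 - K 0 1 = 0 := by linear_combination z01' - z00'
    have G3 : K 0 0 + K 0 1 = 0 := by linear_combination z11' - G1/2 - G2/2
    have sG1 : σ (K 1 0) - σ (K 0 0) = 0 := by
      have := congrArg σ G1
      simpa [map_sub] using this
    have f1 : K 0 2 * σ (K 2 0) = 1 := by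
      linear_combination e00 - K 0 1 * sG1 - σ (K 0 0) * G3
    have f2 : K 0 2 * σ (K 2 0) = 0 := by
      linear_combination -e10 + σ (K 0 0) * G1 + σ (K 1 0) * G2 + K 0 1 * sG1
        + σ (K 0 0) * G3 + σ (K 2 0) * z12'
    exact one_ne_zero (f1.symm.trans f2)
  -- Case jf = (2,1,0)
  · have z00 : Cm 0 0 = 0 := hzero 0 0 (by rw [h0]; decide)
    have z01 : Cm 0 1 = 0 := hzero 0 1 (by rw [h0]; decide)
    have z10 : Cm 1 0 = 0 := hzero 1 0 (by rw [h1]; decide)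
    have z12 : Cm 1 2 = 0 := hzero 1 2 (by rw [h1]; decide)
    have z00' : ((K 1 0 - K 0 0) - (K 1 1 - K 0 1))/2 = 0 := by rw [← hc00]; exact z00
    have z01' : ((K 1 0 - K 0 0) + (K 1 1 - K 0 1))/2 = 0 := by rw [← hc01]; exact z01
    have z10' : ((K 1 0 + K 0 0) - (K 1 1 + K 0 1))/2 = 0 := by rw [← hc10]; exact z10
    have z12' : K 0 2 + K 1 2 = 0 := by rw [← hc12]; exact z12
    have G1 : K 1 0 - K 0 0 = 0 := by linear_combination z00' + z01'
    have G2 : K 1 1 - K 0 1 = 0 := by linear_combination z01' - z00'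
    have G3 : K 0 0 - K 0 1 = 0 := by linear_combination z10' - G1/2 + G2/2
    have hNm00 : Nm 0 0 = 0 := by
      have h := hB0 0
      rw [z00, zero_pow hd0] at h
      exact ((mul_eq_zero.mp h.symm).resolve_left hc₀)
    rw [hn00] at hNm00
    have D1 : K 0 0 = 0 := hNm00
    have D2 : K 0 1 = 0 := by linear_combination D1 - G3
    have D3 : K 1 0 = 0 := by linear_combination D1 + G1
    have D4 : K 1 1 = 0 := by linear_combination D2 + G2
    have f1 : K 0 2 * σ (K 2 0) = 1 := by
      linear_combination e00 - σ (K 0 0) * D1 - σ (K 1 0) * D2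
    have f2 : K 0 2 * σ (K 2 0) = 0 := by
      linear_combination -e10 + σ (K 0 0) * D3 + σ (K 1 0) * D4 + σ (K 2 0) * z12'
    exact one_ne_zero (f1.symm.trans f2)
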